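/- For the 1-dimensional harmonic oscillator waveform Ψ_0(θ) = e^{iφ(θ)/ℏ} a(θ) i^{m(θ)} |r dθ|^{1/2} with φ(θ) = (r²/2)(sin θ cos θ − θ) and m(θ) = ⌊θ/π⌋ + 1, the single-valuedness condition Ψ_0(θ + 2π) = Ψ_0(θ) (with a 2π-periodic) holds if and only if r² = (2N+1)ℏ for some integer N ≥ 0, yielding energy levels E_N = (N + 1/2)ℏ for H = (1/2)(p² + x²). -/

import Mathlib

open Real Complex

/-- For the 1-dimensional harmonic oscillator waveform
`Ψ₀(θ) = e^{iφ(θ)/ℏ} a(θ) i^{m(θ)} |r dθ|^{1/2}` with `φ(θ) = (r²/2)(sin θ cos θ − θ)`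
and `m(θ) = ⌊θ/π⌋ + 1`, single-valuedness `Ψ₀(θ + 2π) = Ψ₀(θ)` (with `a` 2π-periodic
and not identically zero) holds if and only if `r² = (2N+1)ℏ` for some `N : ℕ`,
yielding the energy levels `E_N = r²/2 = (N + 1/2)ℏ` of `H = (1/2)(p² + x²)`. -/
theorem harmonic_oscillator_waveform_quantization
    (r ℏ : ℝ) (hr : 0 < r) (hℏ : 0 < ℏ)
    (a : ℝ → ℂ) (hper : ∀ θ, a (θ + 2 * π) = a θ) (hne : ∃ θ, a θ ≠ 0)
    (φ : ℝ → ℝ) (hφ : ∀ θ, φ θ = r ^ 2 / 2 * (Real.sin θ * Real.cos θ - θ))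
    (Ψ : ℝ → ℂ)
    (hΨ : ∀ θ, Ψ θ = Complex.exp (Complex.I * (φ θ / ℏ)) * a θ
        * Complex.I ^ ((⌊θ / π⌋ + 1 : ℤ)) * (Real.sqrt r : ℂ)) :
    (∀ θ, Ψ (θ + 2 * π) = Ψ θ) ↔
      ∃ N : ℕ, r ^ 2 = (2 * N + 1) * ℏ ∧ r ^ 2 / 2 = (N + 1 / 2) * ℏ := by
  have hπ := Real.pi_pos
  have hπ0 : (π : ℝ) ≠ 0 := ne_of_gt hπ
  have hℏ0 : (ℏ : ℝ) ≠ 0 := ne_of_gt hℏ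
  -- the monodromy factor
  set c : ℂ := Complex.exp (-(Complex.I * (π * r ^ 2 / ℏ))) with hc
  have hφ2 : ∀ θ, φ (θ + 2 * π) = φ θ - π * r ^ 2 := by
    intro θ
    rw [hφ, hφ, Real.sin_add_two_pi, Real.cos_add_two_pi]
    ring
  have hfloor : ∀ θ : ℝ, ⌊(θ + 2 * π) / π⌋ = ⌊θ / π⌋ + 2 := by
    intro θ
    have : (θ + 2 * π) / π = θ / π + (2 : ℤ) := by
      field_simp
      push_cast; ring
    rw [this, Int.floor_add_intCast]
  have key : ∀ θ, Ψ (θ + 2 * π) = -c * Ψ θ := by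
    intro θ
    rw [hΨ, hΨ, hφ2, hper, hfloor]
    have h1 : Complex.I ^ ((⌊θ / π⌋ + 2 + 1 : ℤ)) =
        Complex.I ^ ((⌊θ / π⌋ + 1 : ℤ)) * (-1) := by
      have : (⌊θ / π⌋ + 2 + 1 : ℤ) = (⌊θ / π⌋ + 1) + 2 := by ring
      rw [this, zpow_add₀ Complex.I_ne_zero, zpow_two]
      simp [Complex.I_mul_I]
    have h2 : Complex.exp (Complex.I * (↑(φ θ - π * r ^ 2) / ↑ℏ)) =
        Complex.exp (Complex.I * (↑(φ θ) / ↑ℏ)) * c := by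
      rw [hc, ← Complex.exp_add]
      congr 1
      push_cast
      ring
    rw [h1, h2]
    ring
  have hnc : (∀ θ, Ψ (θ + 2 * π) = Ψ θ) ↔ -c = 1 := by
    constructor
    · intro h
      obtain ⟨θ₀, ha⟩ := hne
      have hΨ0 : Ψ θ₀ ≠ 0 := by
        rw [hΨ]
        have hsr : (Real.sqrt r : ℂ) ≠ 0 := by
          simp [Real.sqrt_eq_zero', not_le, hr, le_of_lt hr, ne_of_gt hr]
        exact mul_ne_zero (mul_ne_zero (mul_ne_zero (Complex.exp_ne_zero _) ha)
          (zpow_ne_zero _ Complex.I_ne_zero)) hsr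
      have heq := (key θ₀).symm.trans (h θ₀)
      have h2 : (-c - 1) * Ψ θ₀ = 0 := by linear_combination heq
      rcases mul_eq_zero.mp h2 with h3 | h3
      · linear_combination h3
      · exact absurd h3 hΨ0
    · intro h θ
      rw [key θ, h, one_mul]
  rw [hnc]
  constructor
  · intro h
    have hc1 : Complex.exp (-(Complex.I * (π * r ^ 2 / ℏ)) + π * Complex.I) = 1 := by
      rw [Complex.exp_add, Complex.exp_pi_mul_I]
      rw [hc] at h
      linear_combination h
    obtain ⟨n, hn⟩ := Complex.exp_eq_one_iff.mp hc1
    -- extract real equation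
    have hre : -(π * r ^ 2 / ℏ) + π = n * (2 * π) := by
      have := hn
      have h2 : (Complex.I * (↑(-(π * r ^ 2 / ℏ) + π)) : ℂ) = Complex.I * (↑((n : ℝ) * (2 * π))) := by
        push_cast
        push_cast at this
        linear_combination this
      have h3 := mul_left_cancel₀ Complex.I_ne_zero h2
      exact_mod_cast h3
    have hrℏ : r ^ 2 / ℏ = 1 - 2 * n := by
      field_simp at hre ⊢
      nlinarith [hre]
    have hpos : (0 : ℝ) < r ^ 2 / ℏ := div_pos (by positivity) hℏ
    have hn0 : n ≤ 0 := by
      by_contra hn1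
      push_neg at hn1
      have : (1 : ℝ) ≤ (n : ℝ) := by exact_mod_cast hn1
      nlinarith [hrℏ, hpos]
    refine ⟨(-n).toNat, ?_, ?_⟩
    · have hN : ((-n).toNat : ℝ) = -(n : ℝ) := by
        have := Int.toNat_of_nonneg (neg_nonneg.mpr hn0)
        exact_mod_cast congrArg (Int.cast : ℤ → ℝ) this
      rw [hN]
      have : r ^ 2 = (1 - 2 * n) * ℏ := by
        field_simp at hrℏ
        linarith [hrℏ]
      rw [this]; ring
    · have hN : ((-n).toNat : ℝ) = -(n : ℝ) := by
        have := Int.toNat_of_nonneg (neg_nonneg.mpr hn0)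
        exact_mod_cast congrArg (Int.cast : ℤ → ℝ) this
      rw [hN]
      have : r ^ 2 = (1 - 2 * n) * ℏ := by
        field_simp at hrℏ
        linarith [hrℏ]
      rw [this]; ring
  · rintro ⟨N, hN, -⟩
    have hrℏ : (r ^ 2 / ℏ : ℝ) = 2 * N + 1 := by
      field_simp [hN]
      linear_combination hN
    have hdiv : ((r:ℂ) ^ 2 / (ℏ:ℂ)) = 2 * (N:ℂ) + 1 := by
      have hc2 : ((r ^ 2 / ℏ : ℝ) : ℂ) = ((2 * (N:ℝ) + 1 : ℝ) : ℂ) := by rw [hrℏ]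
      push_cast at hc2
      exact hc2
    have harg : (-(Complex.I * (π * r ^ 2 / ℏ)) : ℂ) =
        π * Complex.I + ((-(N:ℤ)-1 : ℤ) : ℂ) * (2 * π * Complex.I) := by
      push_cast
      linear_combination (-(π:ℂ) * Complex.I) * hdiv
    rw [hc, harg, Complex.exp_add, Complex.exp_pi_mul_I,
      Complex.exp_int_mul_two_pi_mul_I]
    norm_num
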